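/- Let D ≥ 1 be a natural number, σ > 0, α > 1 a real number, and let r_1, …, r_D > 0 be weights with Σ_{d=1}^D r_d = 1. For each d set σ_d² := σ²/(D·r_d). Let s_1, …, s_D ≥ 0 and let a, b ∈ ℝ^D satisfy |a_d − b_d| ≤ s_d for all d. Then the Rényi divergence of order α between the product Gaussian densities ∏_{d=1}^D φ_{a_d,σ_d²}(x_d) and ∏_{d=1}^D φ_{b_d,σ_d²}(x_d), namely (α−1)⁻¹·ln ∫_{ℝ^D} (∏_{d=1}^D φ_{a_d,σ_d²}(x_d))^α · (∏_{d=1}^D φ_{b_d,σ_d²}(x_d))^{1−α} dx, is at most α·D·(Σ_{d=1}^D r_d·s_d²)/(2σ²). -/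

import Mathlib

open MeasureTheory Real

/-- Gaussian density with mean `μ` and variance `v`. -/
noncomputable def gaussPDF (μ v x : ℝ) : ℝ :=
  (Real.sqrt (2 * Real.pi * v))⁻¹ * Real.exp (-(x - μ) ^ 2 / (2 * v))

lemma gaussPDF_nonneg (μ v x : ℝ) : 0 ≤ gaussPDF μ v x := by
  unfold gaussPDF; positivity

lemma gaussPDF_eq (μ : ℝ) {v : ℝ} (hv : 0 < v) :
    gaussPDF μ v = ProbabilityTheory.gaussianPDFReal μ ⟨v, hv.le⟩ := by
  funext x
  simp [gaussPDF, ProbabilityTheory.gaussianPDFReal, neg_div]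
  rfl

lemma integral_gaussPDF (μ : ℝ) {v : ℝ} (hv : 0 < v) :
    ∫ x : ℝ, gaussPDF μ v x = 1 := by
  rw [gaussPDF_eq μ hv]
  exact ProbabilityTheory.integral_gaussianPDFReal_eq_one μ
    (NNReal.coe_ne_zero.mp hv.ne')

lemma integral_gauss_renyi (a b v α : ℝ) (hv : 0 < v) :
    ∫ x : ℝ, gaussPDF a v x ^ α * gaussPDF b v x ^ (1 - α)
      = Real.exp (α * (α - 1) * (a - b) ^ 2 / (2 * v)) := by
  set c : ℝ := α * a + (1 - α) * b with hc
  set K : ℝ := Real.exp (α * (α - 1) * (a - b) ^ 2 / (2 * v)) with hK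
  have hS : (0 : ℝ) < Real.sqrt (2 * Real.pi * v) := by
    apply Real.sqrt_pos.mpr; positivity
  have hpt : ∀ x : ℝ, gaussPDF a v x ^ α * gaussPDF b v x ^ (1 - α)
      = K * gaussPDF c v x := by
    intro x
    unfold gaussPDF
    rw [Real.mul_rpow (by positivity) (Real.exp_nonneg _),
        Real.mul_rpow (by positivity) (Real.exp_nonneg _),
        ← Real.exp_mul, ← Real.exp_mul]
    have h1 : (Real.sqrt (2 * Real.pi * v))⁻¹ ^ α *
        (Real.sqrt (2 * Real.pi * v))⁻¹ ^ (1 - α)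
        = (Real.sqrt (2 * Real.pi * v))⁻¹ := by
      rw [← Real.rpow_add (by positivity)]
      norm_num
    have h2 : Real.exp (-(x - a) ^ 2 / (2 * v) * α) *
        Real.exp (-(x - b) ^ 2 / (2 * v) * (1 - α))
        = K * Real.exp (-(x - c) ^ 2 / (2 * v)) := by
      rw [← Real.exp_add, hK, ← Real.exp_add]
      congr 1
      field_simp
      ring
    calc (Real.sqrt (2 * Real.pi * v))⁻¹ ^ α * Real.exp (-(x - a) ^ 2 / (2 * v) * α) *
          ((Real.sqrt (2 * Real.pi * v))⁻¹ ^ (1 - α) *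
            Real.exp (-(x - b) ^ 2 / (2 * v) * (1 - α)))
        = ((Real.sqrt (2 * Real.pi * v))⁻¹ ^ α *
            (Real.sqrt (2 * Real.pi * v))⁻¹ ^ (1 - α)) *
          (Real.exp (-(x - a) ^ 2 / (2 * v) * α) *
            Real.exp (-(x - b) ^ 2 / (2 * v) * (1 - α))) := by ring
      _ = K * ((Real.sqrt (2 * Real.pi * v))⁻¹ * Real.exp (-(x - c) ^ 2 / (2 * v))) := by
          rw [h1, h2]; ring
  simp_rw [hpt]
  rw [integral_const_mul, integral_gaussPDF c hv, mul_one]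

theorem renyi_nonspherical_gauss_le (D : ℕ) (hD : 1 ≤ D) (σ α : ℝ) (hσ : 0 < σ) (hα : 1 < α)
    (r s : Fin D → ℝ) (a b : Fin D → ℝ)
    (hr : ∀ d, 0 < r d) (hrsum : ∑ d, r d = 1)
    (hs : ∀ d, 0 ≤ s d) (hab : ∀ d, |a d - b d| ≤ s d) :
    (α - 1)⁻¹ * Real.log (∫ x : Fin D → ℝ,
        (∏ d, gaussPDF (a d) (σ ^ 2 / (D * r d)) (x d)) ^ α *
        (∏ d, gaussPDF (b d) (σ ^ 2 / (D * r d)) (x d)) ^ (1 - α)) ≤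
      α * D * (∑ d, r d * s d ^ 2) / (2 * σ ^ 2) := by
  have hDpos : (0 : ℝ) < D := by exact_mod_cast hD
  have hv : ∀ d : Fin D, (0 : ℝ) < σ ^ 2 / (D * r d) := fun d => by
    have := hr d; positivity
  have hrw : (∫ x : Fin D → ℝ,
        (∏ d, gaussPDF (a d) (σ ^ 2 / (D * r d)) (x d)) ^ α *
        (∏ d, gaussPDF (b d) (σ ^ 2 / (D * r d)) (x d)) ^ (1 - α))
      = ∫ x : Fin D → ℝ, ∏ d, (gaussPDF (a d) (σ ^ 2 / (D * r d)) (x d) ^ α *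
          gaussPDF (b d) (σ ^ 2 / (D * r d)) (x d) ^ (1 - α)) := by
    congr 1
    funext x
    rw [Finset.prod_mul_distrib,
      Real.finset_prod_rpow _ _ (fun d _ => gaussPDF_nonneg _ _ _) α,
      Real.finset_prod_rpow _ _ (fun d _ => gaussPDF_nonneg _ _ _) (1 - α)]
  rw [hrw, MeasureTheory.integral_fintype_prod_volume_eq_prod
    (fun d x => gaussPDF (a d) (σ ^ 2 / (D * r d)) x ^ α *
      gaussPDF (b d) (σ ^ 2 / (D * r d)) x ^ (1 - α))]
  have : ∀ d : Fin D, (∫ x : ℝ, gaussPDF (a d) (σ ^ 2 / (D * r d)) x ^ α *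
      gaussPDF (b d) (σ ^ 2 / (D * r d)) x ^ (1 - α))
      = Real.exp (α * (α - 1) * (a d - b d) ^ 2 / (2 * (σ ^ 2 / (D * r d)))) :=
    fun d => integral_gauss_renyi (a d) (b d) _ α (hv d)
  simp_rw [this, ← Real.exp_sum, Real.log_exp]
  have hα1 : (0 : ℝ) < α - 1 := by linarith
  have hterm : ∀ d : Fin D,
      α * (α - 1) * (a d - b d) ^ 2 / (2 * (σ ^ 2 / (D * r d)))
      ≤ (α - 1) * (α * D * (r d * s d ^ 2) / (2 * σ ^ 2)) := by
    intro d
    have hsq : (a d - b d) ^ 2 ≤ s d ^ 2 := by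
      rw [← sq_abs]
      exact pow_le_pow_left₀ (abs_nonneg _) (hab d) 2
    have hrd := hr d
    rw [div_le_iff₀ (by positivity)]
    have hkey : (α - 1) * (α * ↑D * (r d * s d ^ 2) / (2 * σ ^ 2)) * (2 * (σ ^ 2 / (↑D * r d)))
        = α * (α - 1) * s d ^ 2 := by
      field_simp
    rw [hkey]
    have : 0 ≤ α * (α - 1) := by nlinarith
    exact mul_le_mul_of_nonneg_left hsq this
  have hsum : (∑ d, α * (α - 1) * (a d - b d) ^ 2 / (2 * (σ ^ 2 / (D * r d))))
      ≤ (α - 1) * (α * D * (∑ d, r d * s d ^ 2) / (2 * σ ^ 2)) := by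
    calc (∑ d, α * (α - 1) * (a d - b d) ^ 2 / (2 * (σ ^ 2 / (D * r d))))
        ≤ ∑ d, (α - 1) * (α * D * (r d * s d ^ 2) / (2 * σ ^ 2)) :=
          Finset.sum_le_sum fun d _ => hterm d
      _ = (α - 1) * (α * D * (∑ d, r d * s d ^ 2) / (2 * σ ^ 2)) := by
          have h : ∀ d : Fin D, (α - 1) * (α * ↑D * (r d * s d ^ 2) / (2 * σ ^ 2))
              = ((α - 1) * α * ↑D / (2 * σ ^ 2)) * (r d * s d ^ 2) := fun d => by ring
          simp_rw [h, ← Finset.mul_sum]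
          field_simp
  calc (α - 1)⁻¹ * (∑ d, α * (α - 1) * (a d - b d) ^ 2 / (2 * (σ ^ 2 / (D * r d))))
      ≤ (α - 1)⁻¹ * ((α - 1) * (α * D * (∑ d, r d * s d ^ 2) / (2 * σ ^ 2))) := by
        apply mul_le_mul_of_nonneg_left hsum (by positivity)
    _ = α * D * (∑ d, r d * s d ^ 2) / (2 * σ ^ 2) := by
        field_simp
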